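/- Let p be a prime and consider the field K = F_p(t_1, t_2, …) of rational functions in the variables t_i. For each n, the polynomial f = t_1 x_1^p + ⋯ + t_n x_n^p ∈ K[x_1, …, x_n] has strength 1 over the algebraic closure of K (i.e., it factors as g·h with g, h homogeneous of positive degrees less than p, namely as a product of a linear form and its (p−1)-st power after extracting p-th roots of the t_i), while any expression f = Σ_{i=1}^s g_i h_i over K with g_i, h_i homogeneous of degrees strictly between 0 and p requires s ≥ n/2. -/

import Mathlib

open MvPolynomial

/-- The field `K = 𝔽_p(t₁, t₂, …)` of rational functions in countably many variables. -/
noncomputable abbrev RatFuncField (p : ℕ) : Type :=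
  FractionRing (MvPolynomial ℕ (ZMod p))

/-- The form `f = t₁ x₁^p + ⋯ + t_n x_n^p` over `𝔽_p(t₁, t₂, …)`. -/
noncomputable def diagForm (p : ℕ) [Fact p.Prime] (n : ℕ) :
    MvPolynomial (Fin n) (RatFuncField p) :=
  ∑ i : Fin n,
    C (algebraMap (MvPolynomial ℕ (ZMod p)) (RatFuncField p) (X (i : ℕ))) * X i ^ p

section Counting
variable {F : Type*} [Field F] {n : ℕ}

lemma degree_fin (d : Fin n →₀ ℕ) : d.degree = ∑ j, d j := by
  rw [Finsupp.degree]
  exact Finset.sum_subset (Finset.subset_univ _)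
    (fun j _ hj => Finsupp.notMem_support_iff.mp hj)

lemma homogComp_mul {q c : MvPolynomial (Fin n) F} {d e : ℕ}
    (hq : q.IsHomogeneous d) (hde : d ≤ e) :
    homogeneousComponent e (c * q) = homogeneousComponent (e - d) c * q := by
  induction c using MvPolynomial.induction_on' with
  | monomial μ a =>
    have h1 : ((monomial μ a : MvPolynomial (Fin n) F) * q).IsHomogeneous (μ.degree + d) :=
      (isHomogeneous_monomial _ rfl).mul hq
    have h2 : (monomial μ a : MvPolynomial (Fin n) F).IsHomogeneous μ.degree :=
      isHomogeneous_monomial _ rfl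
    rw [homogeneousComponent_of_mem ((mem_homogeneousSubmodule _ _).mpr h1),
      homogeneousComponent_of_mem ((mem_homogeneousSubmodule _ _).mpr h2)]
    by_cases hed : e - d = μ.degree
    · rw [if_pos (show e = μ.degree + d by omega), if_pos hed]
    · rw [if_neg (show ¬ e = μ.degree + d by omega), if_neg hed, zero_mul]
  | add c1 c2 ih1 ih2 => rw [add_mul, map_add, map_add, ih1, ih2, add_mul]

lemma card_le_of_Xp_mem {ι : Type*} [Fintype ι] (p : ℕ) (hp : 2 ≤ p)
    (q : ι → MvPolynomial (Fin n) F) (dq : ι → ℕ)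
    (hd1 : ∀ k, 1 ≤ dq k) (hdp : ∀ k, dq k ≤ p)
    (hq : ∀ k, (q k).IsHomogeneous (dq k))
    (hX : ∀ j : Fin n, (X j : MvPolynomial (Fin n) F) ^ p ∈ Ideal.span (Set.range q)) :
    n ≤ Fintype.card ι := by
  classical
  by_contra hlt
  push_neg at hlt
  have hn1 : 1 ≤ n := by omega
  -- homogeneous coefficients for the membership of X j ^ p
  have hXc : ∀ j : Fin n, ∃ c : ι → MvPolynomial (Fin n) F,
      (∀ k, (c k).IsHomogeneous (p - dq k)) ∧
      (X j : MvPolynomial (Fin n) F) ^ p = ∑ k, c k * q k := by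
    intro j
    obtain ⟨c0, hc0⟩ := Ideal.mem_span_range_iff_exists_fun.mp (hX j)
    refine ⟨fun k => homogeneousComponent (p - dq k) (c0 k),
      fun k => homogeneousComponent_isHomogeneous _ _, ?_⟩
    have hXh : ((X j : MvPolynomial (Fin n) F) ^ p).IsHomogeneous p := by
      simpa using (isHomogeneous_X F j).pow p
    calc (X j : MvPolynomial (Fin n) F) ^ p
        = homogeneousComponent p ((X j : MvPolynomial (Fin n) F) ^ p) := by
          rw [homogeneousComponent_of_mem ((mem_homogeneousSubmodule _ _).mpr hXh),
            if_pos rfl]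
      _ = homogeneousComponent p (∑ k, c0 k * q k) := by rw [hc0]
      _ = ∑ k, homogeneousComponent (p - dq k) (c0 k) * q k := by
          rw [map_sum]; exact Finset.sum_congr rfl fun k _ => homogComp_mul (hq k) (hdp k)
  choose c hch hce using hXc
  set M : Submodule F (MvPolynomial (Fin n) F) := Submodule.span F
    {P | ∃ (e : ι → ℕ) (b : Fin n →₀ ℕ), (∀ j, b j < p) ∧
      P = (∏ k, q k ^ e k) * monomial b 1} with hM
  have hqmul : ∀ (k : ι) x, x ∈ M → q k * x ∈ M := by
    intro k x hx
    have hle : Submodule.map (LinearMap.mulLeft F (q k)) M ≤ M := by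
      rw [hM, Submodule.map_span, Submodule.span_le]
      rintro _ ⟨_, ⟨e, b, hb, rfl⟩, rfl⟩
      refine Submodule.subset_span ⟨Function.update e k (e k + 1), b, hb, ?_⟩
      have hfun : ∀ k' ∈ Finset.univ, q k' ^ (Function.update e k (e k + 1) k')
          = Function.update (fun k' => q k' ^ e k') k (q k ^ (e k + 1)) k' := by
        intro k' _
        by_cases hk : k' = k
        · subst hk; simp
        · simp [Function.update_of_ne hk]
      have h1 : (∏ k', q k' ^ Function.update e k (e k + 1) k')
          = q k * ∏ k', q k' ^ e k' := by
        rw [Finset.prod_congr rfl hfun, Finset.prod_update_of_mem (Finset.mem_univ k),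
          ← Finset.mul_prod_erase Finset.univ (fun k' => q k' ^ e k') (Finset.mem_univ k),
          pow_succ, Finset.erase_eq]
        ring
      rw [LinearMap.mulLeft_apply, h1]
      ring
    exact hle ⟨x, hx, rfl⟩
  have key : ∀ d : ℕ, ∀ μ : Fin n →₀ ℕ, μ.degree ≤ d →
      (monomial μ 1 : MvPolynomial (Fin n) F) ∈ M := by
    intro d
    induction d using Nat.strong_induction_on with
    | _ d IH =>
      intro μ hμd
      by_cases hsmall : ∀ j, μ j < p
      · exact Submodule.subset_span ⟨0, μ, hsmall, by simp⟩
      push_neg at hsmall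
      obtain ⟨j, hj⟩ := hsmall
      set ν : Fin n →₀ ℕ := μ - Finsupp.single j p with hνdef
      have hsum : Finsupp.single j p + ν = μ := by
        ext j'
        simp only [hνdef, Finsupp.add_apply, Finsupp.tsub_apply, Finsupp.single_apply]
        split_ifs with hcond
        · subst hcond; omega
        · omega
      have hνdeg : p + ν.degree = μ.degree := by
        rw [← hsum, degree_fin, degree_fin]
        simp [Finsupp.single_apply, Finset.sum_add_distrib, Finset.sum_ite_eq]
      have hmono : (monomial μ 1 : MvPolynomial (Fin n) F) = X j ^ p * monomial ν 1 := by
        rw [X_pow_eq_monomial, monomial_mul, one_mul, hsum]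
      rw [hmono, hce j, Finset.sum_mul]
      refine Submodule.sum_mem _ fun k _ => ?_
      have h2 : c j k * q k * monomial ν 1 = q k * (c j k * monomial ν 1) := by ring
      rw [h2]
      refine hqmul k _ ?_
      have hhom : (c j k * monomial ν 1).IsHomogeneous ((p - dq k) + ν.degree) :=
        (hch j k).mul (isHomogeneous_monomial _ rfl)
      have hdlt : (p - dq k) + ν.degree < d := by
        have h3 := hd1 k; have h4 := hdp k
        have h5 : p ≤ μ.degree := le_trans hj (Finsupp.le_degree j μ)
        omega
      rw [as_sum (c j k * monomial ν 1)]
      refine Submodule.sum_mem _ fun v hv => ?_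
      have hvdeg : v.degree = (p - dq k) + ν.degree := by
        by_contra hne
        exact (mem_support_iff.mp hv) (hhom.coeff_eq_zero hne)
      have h6 : (monomial v (coeff v (c j k * monomial ν 1)) : MvPolynomial (Fin n) F)
          = coeff v (c j k * monomial ν 1) • monomial v 1 := by
        rw [smul_monomial, smul_eq_mul, mul_one]
      rw [h6]
      exact Submodule.smul_mem _ _ (IH _ hdlt v (le_of_eq hvdeg))
  -- counting
  set m := Fintype.card ι with hm
  set D : ℕ := (n * p) ^ n with hDdef
  set d : ℕ := n * D with hddef
  let ψ : ((ι → Fin (d + 1)) × (Fin n → Fin p)) → MvPolynomial (Fin n) F := fun eb =>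
    (∏ k, q k ^ (eb.1 k : ℕ)) * monomial (Finsupp.equivFunOnFinite.symm fun j => (eb.2 j : ℕ)) 1
  have hspan : ∀ μ : Fin n →₀ ℕ, μ.degree ≤ d →
      (monomial μ 1 : MvPolynomial (Fin n) F) ∈ Submodule.span F (Set.range ψ) := by
    intro μ hμ
    have hmm : (monomial μ 1 : MvPolynomial (Fin n) F).IsHomogeneous μ.degree :=
      isHomogeneous_monomial _ rfl
    have h1 : (monomial μ 1 : MvPolynomial (Fin n) F)
        = homogeneousComponent μ.degree (monomial μ 1) := by
      rw [homogeneousComponent_of_mem ((mem_homogeneousSubmodule _ _).mpr hmm), if_pos rfl]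
    have h2 : homogeneousComponent μ.degree (monomial μ 1 : MvPolynomial (Fin n) F) ∈
        Submodule.map (homogeneousComponent μ.degree) M :=
      Submodule.mem_map_of_mem (key μ.degree μ le_rfl)
    rw [hM, Submodule.map_span] at h2
    rw [h1]
    refine Submodule.span_le.mpr ?_ h2
    rintro _ ⟨_, ⟨e, b, hb, rfl⟩, rfl⟩
    have hhom : ((∏ k, q k ^ e k) * monomial b 1 : MvPolynomial (Fin n) F).IsHomogeneous
        ((∑ k, dq k * e k) + b.degree) :=
      (IsHomogeneous.prod Finset.univ _ _ fun k _ => (hq k).pow (e k)).mul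
        (isHomogeneous_monomial _ rfl)
    rw [SetLike.mem_coe, homogeneousComponent_of_mem ((mem_homogeneousSubmodule _ _).mpr hhom)]
    by_cases hEq : μ.degree = (∑ k, dq k * e k) + b.degree
    · rw [if_pos hEq]
      have he : ∀ k, e k < d + 1 := by
        intro k
        have h5 : dq k * e k ≤ ∑ k', dq k' * e k' :=
          Finset.single_le_sum (f := fun k' => dq k' * e k') (fun k' _ => Nat.zero_le _)
            (Finset.mem_univ k)
        have h6 := hd1 k
        have h7 : e k ≤ dq k * e k := Nat.le_mul_of_pos_left _ h6
        omega
      refine Submodule.subset_span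
        ⟨⟨fun k => ⟨e k, he k⟩, fun j' => ⟨b j', hb j'⟩⟩, ?_⟩
      show (∏ k, q k ^ e k) * monomial (Finsupp.equivFunOnFinite.symm fun j' => b j') 1 = _
      rw [show (fun j' => b j') = ⇑b from rfl, Finsupp.equivFunOnFinite_symm_coe]
    · rw [if_neg hEq]
      exact Submodule.zero_mem _
  -- linear independence
  let v : (Fin n → Fin (D + 1)) → MvPolynomial (Fin n) F := fun w =>
    monomial (Finsupp.equivFunOnFinite.symm fun j => (w j : ℕ)) 1
  have hvmem : ∀ w, v w ∈ Submodule.span F (Set.range ψ) := by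
    intro w
    refine hspan _ ?_
    rw [degree_fin]
    calc ∑ j, (Finsupp.equivFunOnFinite.symm fun j' => ((w j' : ℕ))) j
        = ∑ j, (w j : ℕ) := by
          exact Finset.sum_congr rfl fun j _ => by
            simp [Finsupp.equivFunOnFinite]
      _ ≤ ∑ _j : Fin n, D := Finset.sum_le_sum fun j _ => Nat.lt_succ_iff.mp (w j).isLt
      _ = n * D := by simp [Finset.sum_const, Finset.card_univ, smul_eq_mul]
  have hvind : LinearIndependent F v := by
    have hco : v = (fun s : Fin n →₀ ℕ => (monomial s 1 : MvPolynomial (Fin n) F)) ∘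
        (fun w : Fin n → Fin (D + 1) => Finsupp.equivFunOnFinite.symm fun j => (w j : ℕ)) := rfl
    rw [hco, ← coe_basisMonomials]
    exact (basisMonomials (Fin n) F).linearIndependent.comp _
      (fun w1 w2 hw => funext fun j =>
        Fin.val_injective (congrFun (Finsupp.equivFunOnFinite.symm.injective hw) j))
  haveI : Module.Finite F (Submodule.span F (Set.range ψ)) :=
    FiniteDimensional.span_of_finite F (Set.finite_range ψ)
  let v' : (Fin n → Fin (D + 1)) → (Submodule.span F (Set.range ψ)) := fun w => ⟨v w, hvmem w⟩
  have hv' : LinearIndependent F v' :=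
    LinearIndependent.of_comp (Submodule.span F (Set.range ψ)).subtype hvind
  have h1 := hv'.fintype_card_le_finrank
  have h2 : Module.finrank F (Submodule.span F (Set.range ψ))
      ≤ Fintype.card ((ι → Fin (d + 1)) × (Fin n → Fin p)) := finrank_range_le_card ψ
  have hc1 : Fintype.card (Fin n → Fin (D + 1)) = (D + 1) ^ n := by
    simp [Fintype.card_fun]
  have hc2 : Fintype.card ((ι → Fin (d + 1)) × (Fin n → Fin p)) = (d + 1) ^ m * p ^ n := by
    rw [Fintype.card_prod, Fintype.card_fun, Fintype.card_fun, Fintype.card_fin,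
      Fintype.card_fin, Fintype.card_fin]
  have hmain : (D + 1) ^ n ≤ (d + 1) ^ m * p ^ n := by
    rw [← hc1, ← hc2]
    exact le_trans h1 h2
  -- arithmetic contradiction
  have e1 : d + 1 ≤ n * (D + 1) := by
    have : n * (D + 1) = n * D + n * 1 := Nat.mul_add n D 1
    omega
  have hA : (d + 1) ^ m ≤ (n * (D + 1)) ^ (n - 1) := by
    calc (d + 1) ^ m ≤ (n * (D + 1)) ^ m := Nat.pow_le_pow_left e1 m
      _ ≤ (n * (D + 1)) ^ (n - 1) := Nat.pow_le_pow_right (by positivity) (by omega)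
  have hB : (D + 1) ^ n ≤ (D + 1) ^ (n - 1) * (n ^ (n - 1) * p ^ n) := by
    calc (D + 1) ^ n ≤ (n * (D + 1)) ^ (n - 1) * p ^ n :=
          le_trans hmain (Nat.mul_le_mul_right _ hA)
      _ = (D + 1) ^ (n - 1) * (n ^ (n - 1) * p ^ n) := by rw [Nat.mul_pow]; ring
  have hD2 : (D + 1) ^ n = (D + 1) ^ (n - 1) * (D + 1) := by
    rw [← pow_succ]
    congr 1
    omega
  rw [hD2] at hB
  have hE : D + 1 ≤ n ^ (n - 1) * p ^ n := Nat.le_of_mul_le_mul_left hB (by positivity)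
  have hF : n ^ (n - 1) * p ^ n ≤ D := by
    rw [hDdef, Nat.mul_pow]
    exact Nat.mul_le_mul_right _ (Nat.pow_le_pow_right hn1 (by omega))
  omega

end Counting


abbrev Rp (p : ℕ) : Type := MvPolynomial ℕ (ZMod p)

/-- Coefficientwise derivation `∂/∂tⱼ` on `(𝔽_p[t₁,…])[x₁,…,xₙ]`. -/
noncomputable def Dt (p n : ℕ) (j : ℕ) (x : MvPolynomial (Fin n) (Rp p)) :
    MvPolynomial (Fin n) (Rp p) :=
  (sumAlgEquiv (ZMod p) (Fin n) ℕ)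
    (pderiv (Sum.inr j) ((sumAlgEquiv (ZMod p) (Fin n) ℕ).symm x))

lemma Dt_sum (p n : ℕ) (j : ℕ) {ι : Type*} (s : Finset ι)
    (f : ι → MvPolynomial (Fin n) (Rp p)) :
    Dt p n j (∑ i ∈ s, f i) = ∑ i ∈ s, Dt p n j (f i) := by
  simp [Dt]

lemma Dt_mul (p n : ℕ) (j : ℕ) (x y : MvPolynomial (Fin n) (Rp p)) :
    Dt p n j (x * y) = Dt p n j x * y + x * Dt p n j y := by
  simp only [Dt, map_mul, pderiv_mul, map_add, AlgEquiv.apply_symm_apply]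

lemma eps_symm_C (p n : ℕ) (r : Rp p) :
    (sumAlgEquiv (ZMod p) (Fin n) ℕ).symm (C r) = rename Sum.inr r := by
  rw [AlgEquiv.symm_apply_eq]
  have := AlgHom.congr_fun (sumAlgEquiv_comp_rename_inr (ZMod p) (Fin n) ℕ) r
  simpa [algebraMap_eq] using this.symm

lemma Dt_C (p n : ℕ) (j : ℕ) (r : Rp p) :
    Dt p n j (C r) = C (pderiv j r) := by
  rw [Dt, eps_symm_C, pderiv_rename Sum.inr_injective]
  have := AlgHom.congr_fun (sumAlgEquiv_comp_rename_inr (ZMod p) (Fin n) ℕ) (pderiv j r)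
  simpa [algebraMap_eq] using this

lemma eps_symm_X (p n : ℕ) (i : Fin n) :
    (sumAlgEquiv (ZMod p) (Fin n) ℕ).symm (X i) = X (Sum.inl i) := by
  rw [AlgEquiv.symm_apply_eq]
  have := AlgHom.congr_fun (sumAlgEquiv_comp_rename_inl (ZMod p) (Fin n) ℕ) (X i)
  simpa using this

lemma Dt_Xpow (p n : ℕ) (j : ℕ) (i : Fin n) (e : ℕ) :
    Dt p n j ((X i : MvPolynomial (Fin n) (Rp p)) ^ e) = 0 := by
  rw [Dt, map_pow, eps_symm_X, pderiv_pow, pderiv_X_of_ne (by simp), mul_zero, map_zero]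

lemma exists_denom (p : ℕ) [Fact p.Prime] {n : ℕ}
    (g : MvPolynomial (Fin n) (RatFuncField p)) :
    ∃ (dd : Rp p) (G : MvPolynomial (Fin n) (Rp p)), dd ≠ 0 ∧
      MvPolynomial.map (algebraMap (Rp p) (RatFuncField p)) G =
        C (algebraMap (Rp p) (RatFuncField p) dd) * g := by
  classical
  obtain ⟨b, hb⟩ := IsLocalization.exist_integer_multiples (nonZeroDivisors (Rp p))
    g.support g.coeff
  have hch : ∀ μ : Fin n →₀ ℕ, ∃ r : Rp p, μ ∈ g.support →
      algebraMap (Rp p) (RatFuncField p) r = (b : Rp p) • g.coeff μ := by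
    intro μ
    by_cases hμ : μ ∈ g.support
    · obtain ⟨r, hr⟩ := hb μ hμ
      exact ⟨r, fun _ => hr⟩
    · exact ⟨0, fun hcon => absurd hcon hμ⟩
  choose r hr using hch
  refine ⟨b, ∑ μ ∈ g.support, monomial μ (r μ), mem_nonZeroDivisors_iff_ne_zero.mp b.2, ?_⟩
  rw [map_sum]
  conv_rhs => rw [g.as_sum]
  rw [Finset.mul_sum]
  refine Finset.sum_congr rfl fun μ hμ => ?_
  rw [map_monomial, hr μ hμ, Algebra.smul_def, C_mul_monomial]

theorem Xp_mem_span (p : ℕ) [Fact p.Prime] {n s : ℕ}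
    (g h : Fin s → MvPolynomial (Fin n) (RatFuncField p))
    (hf : diagForm p n = ∑ i, g i * h i) (j : Fin n) :
    (X j : MvPolynomial (Fin n) (RatFuncField p)) ^ p
      ∈ Ideal.span (Set.range g ∪ Set.range h) := by
  classical
  set K := RatFuncField p with hK
  set φ : MvPolynomial (Fin n) (Rp p) →+* MvPolynomial (Fin n) K :=
    (MvPolynomial.map (algebraMap (Rp p) K) : _ →+* _) with hφ
  set I : Ideal (MvPolynomial (Fin n) K) := Ideal.span (Set.range g ∪ Set.range h) with hI
  choose dg G hdg hG using fun i => exists_denom p (g i)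
  choose dh H hdh hH using fun i => exists_denom p (h i)
  set Dd : Rp p := ∏ i, (dg i * dh i) with hDd
  set Dc : Fin s → Rp p := fun i => ∏ k ∈ Finset.univ.erase i, (dg k * dh k) with hDc
  have hDdi : ∀ i, Dd = dg i * dh i * Dc i := fun i =>
    (Finset.mul_prod_erase _ _ (Finset.mem_univ i)).symm
  set F0 : MvPolynomial (Fin n) (Rp p) := ∑ i : Fin n, C (X (i : ℕ)) * X i ^ p with hF0
  have hφF0 : φ F0 = diagForm p n := by
    simp [hF0, diagForm, hφ]
    rfl
  have hBid : C Dd * F0 = ∑ i, C (Dc i) * (G i * H i) := by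
    apply MvPolynomial.map_injective (algebraMap (Rp p) K) (IsFractionRing.injective (Rp p) K)
    show φ (C Dd * F0) = φ (∑ i, C (Dc i) * (G i * H i))
    have hL : φ (C Dd) = C (algebraMap (Rp p) K Dd) := by simp [hφ]
    have hR : ∀ i : Fin s, φ (C (Dc i) * (G i * H i))
        = C (algebraMap (Rp p) K Dd) * (g i * h i) := by
      intro i
      rw [map_mul, map_mul, hφ]
      rw [hG, hH, hDdi i]
      simp only [map_mul, C_mul, map_C]
      ring
    rw [map_mul, hL, hφF0, hf, Finset.mul_sum, map_sum]
    exact Finset.sum_congr rfl fun i _ => (hR i).symm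
  have hdF0 : Dt p n (j : ℕ) F0 = X j ^ p := by
    rw [hF0, Dt_sum]
    have hterm : ∀ i : Fin n, Dt p n (j : ℕ) (C (X (i : ℕ)) * X i ^ p)
        = if i = j then X j ^ p else 0 := by
      intro i
      rw [Dt_mul, Dt_C, Dt_Xpow, mul_zero, add_zero]
      rcases eq_or_ne i j with rfl | hne
      · rw [if_pos rfl, pderiv_X_self, C_1, one_mul]
      · rw [if_neg hne, pderiv_X_of_ne (fun hc => hne (Fin.val_injective hc)), C_0, zero_mul]
    rw [Finset.sum_congr rfl fun i _ => hterm i, Finset.sum_ite_eq' Finset.univ j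
      (fun _ => (X j : MvPolynomial (Fin n) (Rp p)) ^ p), if_pos (Finset.mem_univ j)]
  have hdCF0 : Dt p n (j : ℕ) (C Dd * F0) = C (pderiv (j : ℕ) Dd) * F0 + C Dd * X j ^ p := by
    rw [Dt_mul, Dt_C, hdF0]
  set J : Ideal (MvPolynomial (Fin n) (Rp p)) := Ideal.span (Set.range G ∪ Set.range H) with hJ
  have hGmem : ∀ i, G i ∈ J := fun i => Ideal.subset_span (Or.inl ⟨i, rfl⟩)
  have hHmem : ∀ i, H i ∈ J := fun i => Ideal.subset_span (Or.inr ⟨i, rfl⟩)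
  have hdRHS : Dt p n (j : ℕ) (∑ i, C (Dc i) * (G i * H i)) ∈ J := by
    rw [Dt_sum]
    refine Submodule.sum_mem _ fun i _ => ?_
    rw [Dt_mul, Dt_mul]
    refine Submodule.add_mem _ ?_ ?_
    · exact J.mul_mem_left _ (J.mul_mem_right _ (hGmem i))
    · rw [mul_add]
      refine Submodule.add_mem _ ?_ ?_
      · exact J.mul_mem_left _ (J.mul_mem_left _ (hHmem i))
      · exact J.mul_mem_left _ (J.mul_mem_right _ (hGmem i))
  have hkey : C (pderiv (j : ℕ) Dd) * F0 + C Dd * X j ^ p ∈ J := by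
    rw [← hdCF0, hBid]
    exact hdRHS
  have hφJ : ∀ x ∈ J, φ x ∈ I := by
    intro x hx
    have h1 : Ideal.map φ J ≤ I := by
      rw [hJ, Ideal.map_span, Ideal.span_le]
      rintro _ ⟨y, hy, rfl⟩
      rcases hy with ⟨i, rfl⟩ | ⟨i, rfl⟩
      · rw [hφ, hG]
        exact I.mul_mem_left _ (Ideal.subset_span (Or.inl ⟨i, rfl⟩))
      · rw [hφ, hH]
        exact I.mul_mem_left _ (Ideal.subset_span (Or.inr ⟨i, rfl⟩))
    exact h1 (Ideal.mem_map_of_mem _ hx)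
  have hφkey : C (algebraMap (Rp p) K (pderiv (j : ℕ) Dd)) * diagForm p n
      + C (algebraMap (Rp p) K Dd) * X j ^ p ∈ I := by
    have h2 := hφJ _ hkey
    rw [map_add, map_mul, map_mul, hφF0] at h2
    simpa [hφ, hφF0] using h2
  have hdfI : diagForm p n ∈ I := by
    rw [hf]
    exact Submodule.sum_mem _ fun i _ =>
      Ideal.mul_mem_right _ _ (Ideal.subset_span (Or.inl ⟨i, rfl⟩))
  have h2 : C (algebraMap (Rp p) K Dd) * X j ^ p ∈ I := by
    have h3 := I.sub_mem hφkey (I.mul_mem_left (C (algebraMap (Rp p) K (pderiv (j : ℕ) Dd))) hdfI)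
    simpa using h3
  have hDdne : algebraMap (Rp p) K Dd ≠ 0 := by
    have hprod : Dd ≠ 0 := by
      rw [hDd]
      exact Finset.prod_ne_zero_iff.mpr fun i _ => mul_ne_zero (hdg i) (hdh i)
    intro hc
    exact hprod (IsFractionRing.injective (Rp p) K (by rw [hc, map_zero]))
  have hfinal : (X j : MvPolynomial (Fin n) K) ^ p
      = C (algebraMap (Rp p) K Dd)⁻¹ * (C (algebraMap (Rp p) K Dd) * X j ^ p) := by
    rw [← mul_assoc, ← C_mul, inv_mul_cancel₀ hDdne, C_1, one_mul]
  rw [hI, hfinal]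
  exact I.mul_mem_left _ h2


theorem part1 (p : ℕ) [Fact p.Prime] (n : ℕ) :
    ∃ (g h : MvPolynomial (Fin n) (AlgebraicClosure (RatFuncField p))) (a : ℕ),
      0 < a ∧ a < p ∧ g.IsHomogeneous a ∧ h.IsHomogeneous (p - a) ∧
      MvPolynomial.map (algebraMap (RatFuncField p) (AlgebraicClosure (RatFuncField p)))
          (diagForm p n) = g * h := by
  have hp : p.Prime := Fact.out
  haveI : CharP (RatFuncField p) p :=
    charP_of_injective_algebraMap
      (IsFractionRing.injective (MvPolynomial ℕ (ZMod p)) (RatFuncField p)) p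
  set Kb := AlgebraicClosure (RatFuncField p)
  have hc : ∀ i : Fin n, ∃ c : Kb,
      c ^ p = algebraMap (RatFuncField p) Kb
        (algebraMap (MvPolynomial ℕ (ZMod p)) (RatFuncField p) (X (i : ℕ))) :=
    fun i => IsAlgClosed.exists_pow_nat_eq _ hp.pos
  choose c hcc using hc
  refine ⟨∑ i : Fin n, C (c i) * X i, (∑ i : Fin n, C (c i) * X i) ^ (p - 1), 1,
    one_pos, hp.one_lt, ?_, ?_, ?_⟩
  · exact IsHomogeneous.sum _ _ _ fun i _ => isHomogeneous_C_mul_X _ _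
  · simpa using (IsHomogeneous.sum _ _ 1 fun i _ =>
      isHomogeneous_C_mul_X (c i) i).pow (p - 1)
  · rw [← pow_succ', Nat.sub_add_cancel hp.one_le]
    rw [sum_pow_char]
    simp only [diagForm, map_sum, map_mul, map_C,
      map_pow, map_X, mul_pow, ← C_pow, hcc]
    rfl


/-- Over `K = 𝔽_p(t₁, …)`, the form `f = t₁x₁^p + ⋯ + t_nx_n^p` has absolute strength `1`
(it factors over the algebraic closure into a product of two forms of positive degrees
`< p`), but any strength decomposition of `f` over `K` itself requires at least `n/2`
summands. -/
theorem stmt19 (p : ℕ) [Fact p.Prime] (n : ℕ) :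
    (∃ (g h : MvPolynomial (Fin n) (AlgebraicClosure (RatFuncField p))) (a : ℕ),
      0 < a ∧ a < p ∧ g.IsHomogeneous a ∧ h.IsHomogeneous (p - a) ∧
      MvPolynomial.map (algebraMap (RatFuncField p) (AlgebraicClosure (RatFuncField p)))
          (diagForm p n) = g * h) ∧
    (∀ (s : ℕ) (g h : Fin s → MvPolynomial (Fin n) (RatFuncField p)) (a : Fin s → ℕ),
      (∀ i, 0 < a i ∧ a i < p) → (∀ i, (g i).IsHomogeneous (a i)) →
      (∀ i, (h i).IsHomogeneous (p - a i)) →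
      diagForm p n = ∑ i, g i * h i → n ≤ 2 * s) := by
  refine ⟨part1 p n, ?_⟩
  intro s g h a ha hg hh hsum
  have hp2 : 2 ≤ p := (Fact.out : p.Prime).two_le
  have hX : ∀ j : Fin n, (X j : MvPolynomial (Fin n) (RatFuncField p)) ^ p
      ∈ Ideal.span (Set.range g ∪ Set.range h) := Xp_mem_span p g h hsum
  have hcard := card_le_of_Xp_mem (F := RatFuncField p) p hp2 (Sum.elim g h)
    (Sum.elim a fun i => p - a i)
    (fun k => by rcases k with i | i
                 · exact (ha i).1
                 · have := ha i; simp only [Sum.elim_inr]; omega)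
    (fun k => by rcases k with i | i
                 · have := ha i; simp only [Sum.elim_inl]; omega
                 · simp only [Sum.elim_inr]; omega)
    (fun k => by rcases k with i | i
                 · exact hg i
                 · exact hh i)
    (fun j => by rw [Set.Sum.elim_range]; exact hX j)
  rw [Fintype.card_sum, Fintype.card_fin] at hcard
  omega
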